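/- If a measurable nonnegative function π(T,X) satisfies E[π(T,X) u(T) v(X)] = E[u(T)] E[v(X)] for all bounded measurable u and v, then π(T,X) = f_T(T)/f_{T|X}(T|X) almost surely. -/

import Mathlib

open MeasureTheory
open scoped ENNReal NNReal

/-- If a measurable nonnegative function `π(T,X)` satisfies
`E[π(T,X) u(T) v(X)] = E[u(T)] E[v(X)]` for all bounded measurable `u` and `v`,
then `π(T,X) = f_T(T)/f_{T|X}(T|X)` almost surely (w.r.t. the joint law `μ` of `(T,X)`,
which has joint density `f > 0`, marginals `fT`, `fX`, conditional density `fTX = f/fX`). -/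
theorem stmt2 {r : ℕ} (μ : Measure (ℝ × (Fin r → ℝ))) [IsProbabilityMeasure μ]
    (f : ℝ → (Fin r → ℝ) → ℝ)
    (hfmeas : Measurable fun p : ℝ × (Fin r → ℝ) => f p.1 p.2)
    (hfpos : ∀ t x, 0 < f t x)
    (hdens : μ = (volume : Measure (ℝ × (Fin r → ℝ))).withDensity
      fun p => ENNReal.ofReal (f p.1 p.2))
    (fT : ℝ → ℝ) (hfT : ∀ t, fT t = ∫ x, f t x ∂(volume : Measure (Fin r → ℝ)))
    (fX : (Fin r → ℝ) → ℝ) (hfX : ∀ x, fX x = ∫ t, f t x ∂(volume : Measure ℝ))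
    (fTX : ℝ → (Fin r → ℝ) → ℝ) (hfTX : ∀ t x, fTX t x = f t x / fX x)
    (π : ℝ → (Fin r → ℝ) → ℝ)
    (hπmeas : Measurable fun p : ℝ × (Fin r → ℝ) => π p.1 p.2)
    (hπnonneg : ∀ t x, 0 ≤ π t x)
    (hπint : Integrable (fun p : ℝ × (Fin r → ℝ) => π p.1 p.2) μ)
    (hbal : ∀ u : ℝ → ℝ, ∀ v : (Fin r → ℝ) → ℝ, Measurable u → Measurable v →
      (∃ Cu : ℝ, ∀ t, |u t| ≤ Cu) → (∃ Cv : ℝ, ∀ x, |v x| ≤ Cv) →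
      ∫ p, π p.1 p.2 * u p.1 * v p.2 ∂μ = (∫ p, u p.1 ∂μ) * ∫ p, v p.2 ∂μ) :
    ∀ᵐ p ∂μ, π p.1 p.2 = fT p.1 / fTX p.1 p.2 := by
  classical
  -- lintegral of the density is 1
  have h1 : ∫⁻ p, ENNReal.ofReal (f p.1 p.2) ∂(volume : Measure (ℝ × (Fin r → ℝ))) = 1 := by
    have := measure_univ (μ := μ)
    rw [hdens, withDensity_apply _ MeasurableSet.univ, setLIntegral_univ] at this
    exact this
  -- f is integrable wrt volume
  have hfint : Integrable (fun p : ℝ × (Fin r → ℝ) => f p.1 p.2) volume := by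
    refine ⟨hfmeas.aestronglyMeasurable, ?_⟩
    rw [hasFiniteIntegral_iff_ofReal (ae_of_all _ fun p : ℝ × (Fin r → ℝ) => (hfpos p.1 p.2).le), h1]
    exact ENNReal.one_lt_top
  -- π * f is integrable wrt volume
  have hπf : Integrable (fun p : ℝ × (Fin r → ℝ) => π p.1 p.2 * f p.1 p.2) volume := by
    have := (integrable_withDensity_iff (μ := (volume : Measure (ℝ × (Fin r → ℝ))))
      (hfmeas.ennreal_ofReal) (ae_of_all _ fun p : ℝ × (Fin r → ℝ) => ENNReal.ofReal_lt_top)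
      (g := fun p : ℝ × (Fin r → ℝ) => π p.1 p.2)).mp (hdens ▸ hπint)
    simpa [ENNReal.toReal_ofReal (hfpos _ _).le] using this
  -- fT, fX nonneg
  have hfTnn : ∀ t, 0 ≤ fT t := fun t => (hfT t) ▸ integral_nonneg fun x => (hfpos t x).le
  have hfXnn : ∀ x, 0 ≤ fX x := fun x => (hfX x) ▸ integral_nonneg fun t => (hfpos t x).le
  -- integrability of marginals
  have hvol : (volume : Measure (ℝ × (Fin r → ℝ))) = (volume : Measure ℝ).prod (volume : Measure (Fin r → ℝ)) :=
    rfl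
  have hfTint : Integrable fT (volume : Measure ℝ) := by
    have : Integrable (fun t => ∫ x, f t x ∂(volume : Measure (Fin r → ℝ))) (volume : Measure ℝ) := by
      have := (hvol ▸ hfint : Integrable (fun p : ℝ × (Fin r → ℝ) => f p.1 p.2)
        ((volume : Measure ℝ).prod volume))
      exact this.integral_prod_left
    exact this.congr (ae_of_all _ fun t => (hfT t).symm)
  have hfXint : Integrable fX (volume : Measure (Fin r → ℝ)) := by
    have : Integrable (fun x => ∫ t, f t x ∂(volume : Measure ℝ)) (volume : Measure (Fin r → ℝ)) := by
      have := (hvol ▸ hfint : Integrable (fun p : ℝ × (Fin r → ℝ) => f p.1 p.2)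
        ((volume : Measure ℝ).prod volume))
      exact this.integral_prod_right
    exact this.congr (ae_of_all _ fun x => (hfX x).symm)
  -- marginal measures
  set μT : Measure ℝ := (volume : Measure ℝ).withDensity fun t => ENNReal.ofReal (fT t) with hμT
  set μX : Measure (Fin r → ℝ) := (volume : Measure (Fin r → ℝ)).withDensity fun x => ENNReal.ofReal (fX x) with hμX
  have hfTmeas : AEMeasurable fT (volume : Measure ℝ) := hfTint.aemeasurable
  have hfXmeas : AEMeasurable fX (volume : Measure (Fin r → ℝ)) := hfXint.aemeasurable
  have hμTfin : IsFiniteMeasure μT := by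
    constructor
    rw [hμT, withDensity_apply _ MeasurableSet.univ, setLIntegral_univ,
      ← ofReal_integral_eq_lintegral_ofReal hfTint (ae_of_all _ hfTnn)]
    exact ENNReal.ofReal_lt_top
  have hμXfin : IsFiniteMeasure μX := by
    constructor
    rw [hμX, withDensity_apply _ MeasurableSet.univ, setLIntegral_univ,
      ← ofReal_integral_eq_lintegral_ofReal hfXint (ae_of_all _ hfXnn)]
    exact ENNReal.ofReal_lt_top
  have hsfT : SigmaFinite μT := hμTfin.toSigmaFinite
  have hsfX : SigmaFinite μX := hμXfin.toSigmaFinite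
  -- rectangle computation
  have key : ∀ S : Set ℝ, ∀ E : Set (Fin r → ℝ), MeasurableSet S → MeasurableSet E →
      ((volume : Measure (ℝ × (Fin r → ℝ))).withDensity
        (fun p => ENNReal.ofReal (π p.1 p.2 * f p.1 p.2))) (S ×ˢ E) = μT S * μX E := by
    intro S E hS hE
    -- indicators
    set u : ℝ → ℝ := S.indicator fun _ => (1:ℝ) with hu
    set v : (Fin r → ℝ) → ℝ := E.indicator fun _ => (1:ℝ) with hv
    have humeas : Measurable u := measurable_const.indicator hS
    have hvmeas : Measurable v := measurable_const.indicator hE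
    have hubd : ∀ t, |u t| ≤ 1 := fun t => by
      by_cases h : t ∈ S <;> simp [hu, Set.indicator_apply, h]
    have hvbd : ∀ x, |v x| ≤ 1 := fun x => by
      by_cases h : x ∈ E <;> simp [hv, Set.indicator_apply, h]
    have hbal' := hbal u v humeas hvmeas ⟨1, hubd⟩ ⟨1, hvbd⟩
    -- rewrite the three μ-integrals as volume integrals
    have hwd : ∀ g : ℝ × (Fin r → ℝ) → ℝ, ∫ p, g p ∂μ = ∫ p, g p * f p.1 p.2 ∂(volume : Measure (ℝ × (Fin r → ℝ))) := by
      intro g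
      rw [hdens]
      have : (fun p : ℝ × (Fin r → ℝ) => ENNReal.ofReal (f p.1 p.2))
          = fun p : ℝ × (Fin r → ℝ) => ((fun p : ℝ × (Fin r → ℝ) => (f p.1 p.2).toNNReal) p : ℝ≥0∞) := by
        rfl
      rw [this, integral_withDensity_eq_integral_smul (hfmeas.real_toNNReal)]
      congr 1
      ext p
      simp [NNReal.smul_def, Real.coe_toNNReal _ (hfpos p.1 p.2).le, mul_comm]
    -- left side
    have hL : ∫ p, π p.1 p.2 * u p.1 * v p.2 ∂μ
        = ∫ p in S ×ˢ E, π p.1 p.2 * f p.1 p.2 ∂(volume : Measure (ℝ × (Fin r → ℝ))) := by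
      rw [hwd]
      rw [← integral_indicator (hS.prod hE)]
      congr 1
      ext p
      by_cases h1 : p.1 ∈ S <;> by_cases h2 : p.2 ∈ E <;>
        simp [hu, hv, Set.indicator_apply, h1, h2, Set.mem_prod, mul_comm, mul_assoc, mul_left_comm]
    -- right sides via Fubini
    have hfub : ∀ (S' : Set ℝ) (hS' : MeasurableSet S'),
        ∫ p, u p.1 ∂μ = ∫ t in S, fT t ∂(volume : Measure ℝ) := by
      intro _ _
      rw [hwd]
      have hint : Integrable (fun p : ℝ × (Fin r → ℝ) => u p.1 * f p.1 p.2) volume :=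
        hfint.bdd_mul (humeas.comp measurable_fst).aestronglyMeasurable
          (c := 1) (ae_of_all _ fun p : ℝ × (Fin r → ℝ) => by simpa using hubd p.1)
      calc ∫ p : ℝ × (Fin r → ℝ), u p.1 * f p.1 p.2 ∂volume
          = ∫ t, ∫ x, u t * f t x ∂(volume : Measure (Fin r → ℝ)) ∂(volume : Measure ℝ) := by
            rw [hvol] at hint ⊢; exact integral_prod _ hint
        _ = ∫ t, u t * fT t ∂(volume : Measure ℝ) := by
            congr 1; ext t; rw [integral_const_mul, hfT t]
        _ = ∫ t in S, fT t ∂(volume : Measure ℝ) := by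
            rw [← integral_indicator hS]
            congr 1; ext t
            by_cases h : t ∈ S <;> simp [hu, Set.indicator_apply, h]
    have hfub2 : ∫ p, v p.2 ∂μ = ∫ x in E, fX x ∂(volume : Measure (Fin r → ℝ)) := by
      rw [hwd]
      have hint : Integrable (fun p : ℝ × (Fin r → ℝ) => v p.2 * f p.1 p.2) volume :=
        hfint.bdd_mul (hvmeas.comp measurable_snd).aestronglyMeasurable
          (c := 1) (ae_of_all _ fun p : ℝ × (Fin r → ℝ) => by simpa using hvbd p.2)
      calc ∫ p : ℝ × (Fin r → ℝ), v p.2 * f p.1 p.2 ∂volume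
          = ∫ x, ∫ t, v x * f t x ∂(volume : Measure ℝ) ∂(volume : Measure (Fin r → ℝ)) := by
            rw [hvol] at hint ⊢
            rw [integral_prod_symm _ hint]
        _ = ∫ x, v x * fX x ∂(volume : Measure (Fin r → ℝ)) := by
            congr 1; ext x; rw [integral_const_mul, hfX x]
        _ = ∫ x in E, fX x ∂(volume : Measure (Fin r → ℝ)) := by
            rw [← integral_indicator hE]
            congr 1; ext x
            by_cases h : x ∈ E <;> simp [hv, Set.indicator_apply, h]
    rw [hL, hfub S hS, hfub2] at hbal'
    -- now convert to ENNReal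
    rw [withDensity_apply _ (hS.prod hE), hμT, hμX, withDensity_apply _ hS,
      withDensity_apply _ hE,
      ← ofReal_integral_eq_lintegral_ofReal (hπf.restrict)
        (ae_of_all _ fun p : ℝ × (Fin r → ℝ) => mul_nonneg (hπnonneg _ _) (hfpos _ _).le),
      ← ofReal_integral_eq_lintegral_ofReal (hfTint.restrict) (ae_of_all _ fun t => hfTnn t),
      ← ofReal_integral_eq_lintegral_ofReal (hfXint.restrict) (ae_of_all _ fun x => hfXnn x),
      hbal', ENNReal.ofReal_mul (integral_nonneg fun t => hfTnn t)]
  -- the withDensity measure equals the product measure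
  have hprod : μT.prod μX = (volume : Measure (ℝ × (Fin r → ℝ))).withDensity
      (fun p => ENNReal.ofReal (π p.1 p.2 * f p.1 p.2)) :=
    Measure.prod_eq fun S E hS hE => key S E hS hE
  -- also the product density gives the same product measure
  have hprod2 : μT.prod μX = (volume : Measure (ℝ × (Fin r → ℝ))).withDensity
      (fun p => ENNReal.ofReal (fT p.1) * ENNReal.ofReal (fX p.2)) := by
    refine Measure.prod_eq fun S E hS hE => ?_
    rw [withDensity_apply _ (hS.prod hE)]
    have hres : (volume : Measure (ℝ × (Fin r → ℝ))).restrict (S ×ˢ E)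
        = ((volume : Measure ℝ).restrict S).prod ((volume : Measure (Fin r → ℝ)).restrict E) := by
      rw [hvol, Measure.prod_restrict]
    rw [hres, lintegral_prod_mul (hfTmeas.ennreal_ofReal.restrict)
        (hfXmeas.ennreal_ofReal.restrict),
      hμT, hμX, withDensity_apply _ hS, withDensity_apply _ hE]
  -- conclude density equality a.e.
  have hfin : ∫⁻ p, ENNReal.ofReal (π p.1 p.2 * f p.1 p.2) ∂(volume : Measure (ℝ × (Fin r → ℝ))) ≠ ⊤ := by
    rw [← ofReal_integral_eq_lintegral_ofReal hπf
      (ae_of_all _ fun p : ℝ × (Fin r → ℝ) => mul_nonneg (hπnonneg _ _) (hfpos _ _).le)]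
    exact ENNReal.ofReal_ne_top
  have hae : (fun p : ℝ × (Fin r → ℝ) => ENNReal.ofReal (π p.1 p.2 * f p.1 p.2))
      =ᵐ[(volume : Measure (ℝ × (Fin r → ℝ)))]
      fun p => ENNReal.ofReal (fT p.1) * ENNReal.ofReal (fX p.2) := by
    refine (withDensity_eq_iff ?_ ?_ hfin).mp (hprod ▸ hprod2)
    · exact (hπmeas.mul hfmeas).ennreal_ofReal.aemeasurable
    · have h1 : AEMeasurable (fun p : ℝ × (Fin r → ℝ) => fT p.1) volume :=
        hfTmeas.comp_quasiMeasurePreserving (hvol ▸ Measure.quasiMeasurePreserving_fst)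
      have h2 : AEMeasurable (fun p : ℝ × (Fin r → ℝ) => fX p.2) volume :=
        hfXmeas.comp_quasiMeasurePreserving (hvol ▸ Measure.quasiMeasurePreserving_snd)
      exact h1.ennreal_ofReal.mul h2.ennreal_ofReal
  have hae' : ∀ᵐ p ∂(volume : Measure (ℝ × (Fin r → ℝ))),
      π p.1 p.2 * f p.1 p.2 = fT p.1 * fX p.2 := by
    filter_upwards [hae] with p hp
    rw [← ENNReal.ofReal_mul (hfTnn p.1)] at hp
    exact (ENNReal.ofReal_eq_ofReal_iff
      (mul_nonneg (hπnonneg _ _) (hfpos _ _).le)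
      (mul_nonneg (hfTnn _) (hfXnn _))).mp hp
  rw [hdens, ae_withDensity_iff hfmeas.ennreal_ofReal]
  filter_upwards [hae'] with p hp _
  rw [hfTX, div_div_eq_mul_div, ← hp, mul_div_assoc, div_self (hfpos p.1 p.2).ne', mul_one]
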